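/- Property (*) implies property (**): if there exists a sequence (φₙ : ω₁ → ω₁)ₙ∈ℕ such that for every subset I of ω₁ of cardinality ℵ₁ there exists n with φₙ '' I = ω₁, then there exists a family (g_α : ℕ → ω₁)_{α<ω₁} such that for every g : ℕ → ω₁, for all but countably many α < ω₁ there are infinitely many n with g(n) = g_α(n). (Indeed, g_α(n) := φₙ(α) works.) -/

import Mathlib

set_option linter.unnecessarySimpa false


open Cardinal Set

/-- ω₁, the first uncountable ordinal, viewed as the set of all countable ordinals. -/
abbrev Omega1 := {o : Ordinal.{0} // o < (Cardinal.aleph 1).ord}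

/-- Property (*) implies property (**); indeed g_α(n) := φₙ(α) works. -/
theorem star_implies_star2
    (φ : ℕ → Omega1 → Omega1)
    (hφ : ∀ I : Set Omega1, #I = Cardinal.aleph 1 →
      ∃ n : ℕ, φ n '' I = Set.univ) :
    ∃ g : Omega1 → ℕ → Omega1,
      (∀ α n, g α n = φ n α) ∧
      ∀ k : ℕ → Omega1, {α : Omega1 | {n : ℕ | k n = g α n}.Finite}.Countable := by
  refine ⟨fun α n => φ n α, fun α n => rfl, ?_⟩
  intro k
  by_contra hB
  -- decompose the bad set according to the (finite) matching set
  have hsub : {α : Omega1 | {n : ℕ | k n = φ n α}.Finite} ⊆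
      ⋃ S : Finset ℕ, {α : Omega1 | {n : ℕ | k n = φ n α} = ↑S} := by
    intro α hα
    exact Set.mem_iUnion.2 ⟨hα.toFinset, by simp [hα.coe_toFinset]⟩
  obtain ⟨S, hS⟩ : ∃ S : Finset ℕ,
      ¬ ({α : Omega1 | {n : ℕ | k n = φ n α} = ↑S}).Countable := by
    by_contra h
    push_neg at h
    exact hB ((Set.countable_iUnion h).mono hsub)
  set A := {α : Omega1 | {n : ℕ | k n = φ n α} = ↑S} with hAdef
  -- A has cardinality ℵ₁
  have hOm : #Omega1 = Cardinal.aleph 1 := by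
    have h := Ordinal.mk_Iio_ordinal (Cardinal.aleph.{0} 1).ord
    rw [Cardinal.card_ord, Cardinal.lift_aleph] at h
    rw [Ordinal.lift_one] at h
    exact h
  have hA1 : #A ≤ Cardinal.aleph 1 := hOm ▸ Cardinal.mk_set_le A
  have hA2 : Cardinal.aleph 1 ≤ #A := by
    rw [← Cardinal.succ_aleph0, Order.succ_le_iff, ← not_le,
      Cardinal.le_aleph0_iff_set_countable]
    exact hS
  obtain ⟨n, hn⟩ := hφ A (le_antisymm hA1 hA2)
  by_cases hnS : n ∈ S
  · -- every α ∈ A maps to k n under φ n, but the image is everything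
    -- pick an element different from k n
    have hlim : Order.IsSuccLimit ((Cardinal.aleph 1).ord) :=
      Cardinal.isSuccLimit_ord (Cardinal.aleph0_le_aleph 1)
    have h0 : (0 : Ordinal) < (Cardinal.aleph 1).ord := hlim.pos
    have h1 : (1 : Ordinal) < (Cardinal.aleph 1).ord := Ordinal.one_lt_of_isSuccLimit hlim
    obtain ⟨x, hx⟩ : ∃ x : Omega1, x ≠ k n := by
      rcases eq_or_ne (⟨0, h0⟩ : Omega1) (k n) with h | h
      · exact ⟨⟨1, h1⟩, by
          intro hc
          rw [← h] at hc
          exact one_ne_zero (Subtype.ext_iff.1 hc)⟩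
      · exact ⟨_, h⟩
    have : x ∈ φ n '' A := hn ▸ Set.mem_univ x
    obtain ⟨α, hαA, hαx⟩ := this
    have : k n = φ n α := by
      have := hαA
      rw [hAdef] at this
      have hnmem : n ∈ {m : ℕ | k m = φ m α} := by
        rw [this]; exact_mod_cast hnS
      exact hnmem
    exact hx (by rw [← hαx, ← this])
  · -- k n is not in the image of A under φ n
    have : k n ∈ φ n '' A := hn ▸ Set.mem_univ (k n)
    obtain ⟨α, hαA, hαx⟩ := this
    have hnmem : n ∈ {m : ℕ | k m = φ m α} := hαx.symm
    rw [hAdef] at hαA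
    rw [hαA] at hnmem
    exact hnS (by exact_mod_cast hnmem)
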